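/- Theorem (IG + PL under relaxed WGC): suppose $f = \frac{1}{n}\sum_i f_i$ is $L$-smooth and $\mu$-PL with minimum $f(x^*)$, each $f_i$ is $L_{\max}$-smooth, and $\frac{1}{n}\sum_i\|\nabla f_i(x)\|^2 \leq 2\alpha L(f(x)-f(x^*)) + \sigma^2$ for all $x$. Run the incremental gradient method for $T$ epochs with step size $\eta \leq \min\{\frac{1}{\sqrt{2}nL_{\max}}, \frac{\sqrt{\mu}}{2L_{\max} n\sqrt{\alpha L}}\}$. Then $f(x_n^T) - f(x^*) \leq \left(1 - \frac{n\mu\eta}{2}\right)^T(f(x^0) - f(x^*)) + \frac{2 L_{\max}^2 \eta^2 n^2 \sigma^2}{\mu}$. -/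

import Mathlib

noncomputable section

/-- One epoch of incremental-gradient updates in the fixed order `1, …, n`:
the iterate after `j` steps starting from `x0`, with gradient oracle `g` and
step size `η`. -/
def igIter {d n : ℕ}
    (g : Fin n → EuclideanSpace ℝ (Fin d) → EuclideanSpace ℝ (Fin d))
    (η : ℝ) (x0 : EuclideanSpace ℝ (Fin d)) :
    ℕ → EuclideanSpace ℝ (Fin d)
  | 0 => x0
  | j + 1 =>
      if h : j < n then
        igIter g η x0 j - η • g ⟨j, h⟩ (igIter g η x0 j)
      else igIter g η x0 j


set_option maxHeartbeats 1000000


open InnerProductSpace Finset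

variable {E : Type*} [NormedAddCommGroup E] [InnerProductSpace ℝ E] [CompleteSpace E]

lemma fderiv_apply_eq_inner (f : E → ℝ) (x v : E) :
    fderiv ℝ f x v = @inner ℝ _ _ (gradient f x) v := by
  have : fderiv ℝ f x = toDual ℝ E (gradient f x) := by
    rw [gradient, LinearIsometryEquiv.apply_symm_apply]
  rw [this, toDual_apply_apply]

lemma descent_lemma (f : E → ℝ) (hf : Differentiable ℝ f) {L : ℝ} (hL : 0 ≤ L)
    (hlip : ∀ x y, ‖gradient f x - gradient f y‖ ≤ L * ‖x - y‖) (x v : E) :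
    f (x + v) ≤ f x + @inner ℝ _ _ (gradient f x) v + L / 2 * ‖v‖ ^ 2 := by
  set φ' : ℝ → ℝ := fun t => @inner ℝ _ _ (gradient f (x + t • v)) v with hφ'
  have hcg : Continuous fun t : ℝ => gradient f (x + t • v) := by
    have : LipschitzWith (Real.toNNReal (L * ‖v‖)) fun t : ℝ => gradient f (x + t • v) := by
      apply LipschitzWith.of_dist_le_mul
      intro s t
      rw [dist_eq_norm, Real.dist_eq, Real.coe_toNNReal _ (by positivity)]
      calc ‖gradient f (x + s • v) - gradient f (x + t • v)‖
          ≤ L * ‖(x + s • v) - (x + t • v)‖ := hlip _ _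
        _ = L * ‖v‖ * |s - t| := by
            rw [add_sub_add_left_eq_sub, ← sub_smul, norm_smul, Real.norm_eq_abs]; ring
    exact this.continuous
  have hc : Continuous φ' := hcg.inner continuous_const
  have hderiv : ∀ t ∈ Set.uIcc (0:ℝ) 1, HasDerivAt (fun t => f (x + t • v)) (φ' t) t := by
    intro t _
    have h1 : HasDerivAt (fun t : ℝ => x + t • v) v t := by
      simpa using ((hasDerivAt_id t).smul_const v).const_add x
    have h2 := (hf (x + t • v)).hasGradientAt
    have h3 := h2.hasFDerivAt.comp_hasDerivAt t h1
    have h4 : fderiv ℝ f (x + t • v) v = φ' t := fderiv_apply_eq_inner f _ v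
    simp only [toDual_apply_apply, h4] at h3
    exact h3
  have hint : ∫ t in (0:ℝ)..1, φ' t = f (x + v) - f x := by
    have := intervalIntegral.integral_eq_sub_of_hasDerivAt hderiv (hc.intervalIntegrable 0 1)
    simpa using this
  set ψ : ℝ → ℝ := fun t => @inner ℝ _ _ (gradient f x) v + L * ‖v‖ ^ 2 * t with hψ
  have hcψ : Continuous ψ := by unfold ψ; fun_prop
  have hmono : ∫ t in (0:ℝ)..1, φ' t ≤ ∫ t in (0:ℝ)..1, ψ t := by
    apply intervalIntegral.integral_mono_on (by norm_num) (hc.intervalIntegrable 0 1)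
      (hcψ.intervalIntegrable 0 1)
    intro t ht
    show φ' t ≤ @inner ℝ _ _ (gradient f x) v + L * ‖v‖ ^ 2 * t
    have hb : φ' t - @inner ℝ _ _ (gradient f x) v
        = @inner ℝ _ _ (gradient f (x + t • v) - gradient f x) v := by
      rw [inner_sub_left]
    have h1 : @inner ℝ _ _ (gradient f (x + t • v) - gradient f x) v
        ≤ ‖gradient f (x + t • v) - gradient f x‖ * ‖v‖ := real_inner_le_norm _ _
    have h2 : ‖gradient f (x + t • v) - gradient f x‖ ≤ L * (t * ‖v‖) := by
      have := hlip (x + t • v) x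
      simpa [norm_smul, abs_of_nonneg ht.1] using this
    nlinarith [norm_nonneg v, mul_le_mul_of_nonneg_right h2 (norm_nonneg v)]
  have hval : ∫ t in (0:ℝ)..1, ψ t
      = @inner ℝ _ _ (gradient f x) v + L / 2 * ‖v‖ ^ 2 := by
    unfold ψ
    rw [intervalIntegral.integral_add (intervalIntegrable_const)
      ((by fun_prop : Continuous fun t : ℝ => L * ‖v‖ ^ 2 * t).intervalIntegrable 0 1),
      intervalIntegral.integral_const_mul]
    simp [integral_id]
    ring
  rw [hint, hval] at hmono
  linarith

lemma gradient_inv_mul_sum {n : ℕ} (f : Fin n → E → ℝ)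
    (hdiff : ∀ i, Differentiable ℝ (f i)) (x : E) :
    gradient (fun x => (n:ℝ)⁻¹ * ∑ i, f i x) x = (n:ℝ)⁻¹ • ∑ i, gradient (f i) x := by
  have h1 : HasFDerivAt (fun x => ∑ i, f i x) (∑ i, fderiv ℝ (f i) x) x :=
    HasFDerivAt.fun_sum fun i _ => (hdiff i x).hasFDerivAt
  have h2 : HasFDerivAt (fun x => (n:ℝ)⁻¹ * ∑ i, f i x)
      ((n:ℝ)⁻¹ • ∑ i, fderiv ℝ (f i) x) x := h1.const_mul _
  rw [gradient, h2.fderiv, map_smul, map_sum]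
  rfl

lemma igIter_eq_sub_sum {d n : ℕ}
    (g : Fin n → EuclideanSpace ℝ (Fin d) → EuclideanSpace ℝ (Fin d))
    (η : ℝ) (x0 : EuclideanSpace ℝ (Fin d)) :
    ∀ j, j ≤ n → igIter g η x0 j
      = x0 - η • ∑ k ∈ Finset.range j,
          (if h : k < n then g ⟨k, h⟩ (igIter g η x0 k) else 0) := by
  intro j
  induction j with
  | zero => intro _; simp [igIter]
  | succ j ih =>
    intro hj
    have hjn : j < n := hj
    have hstep : igIter g η x0 (j+1)
        = igIter g η x0 j - η • g ⟨j, hjn⟩ (igIter g η x0 j) := by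
      simp [igIter, hjn]
    rw [hstep, Finset.sum_range_succ, smul_add, dif_pos hjn, ih (le_of_lt hjn)]
    abel

lemma epoch_bound
    (d n : ℕ) (hn : 0 < n)
    (f : Fin n → EuclideanSpace ℝ (Fin d) → ℝ)
    (hdiff : ∀ i, Differentiable ℝ (f i))
    (F : EuclideanSpace ℝ (Fin d) → ℝ)
    (hF : F = fun x => (n : ℝ)⁻¹ * ∑ i, f i x)
    (L Lmax μ : ℝ) (hL : 0 < L) (hμ : 0 < μ) (hLLmax : L ≤ Lmax)
    (hsmooth : ∀ x y : EuclideanSpace ℝ (Fin d),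
      ‖gradient F x - gradient F y‖ ≤ L * ‖x - y‖)
    (hsmooth_i : ∀ i, ∀ x y : EuclideanSpace ℝ (Fin d),
      ‖gradient (f i) x - gradient (f i) y‖ ≤ Lmax * ‖x - y‖)
    (xstar : EuclideanSpace ℝ (Fin d))
    (hmin : ∀ x, F xstar ≤ F x)
    (hPL : ∀ x, F x - F xstar ≤ 1 / (2 * μ) * ‖gradient F x‖ ^ 2)
    (α σ : ℝ) (hα : 0 < α) (hσ : 0 ≤ σ)
    (hWGC : ∀ x, (n : ℝ)⁻¹ * ∑ i, ‖gradient (f i) x‖ ^ 2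
      ≤ 2 * α * L * (F x - F xstar) + σ ^ 2)
    (η : ℝ) (hη0 : 0 < η)
    (hη : η ≤ min (1 / (Real.sqrt 2 * n * Lmax)) (Real.sqrt μ / (2 * Lmax * n * Real.sqrt (α * L))))
    (y : EuclideanSpace ℝ (Fin d)) :
    F (igIter (fun i => gradient (f i)) η y n) - F xstar
      ≤ (1 - n * μ * η / 2) * (F y - F xstar) + Lmax ^ 2 * n ^ 3 * η ^ 3 * σ ^ 2 := by
  have hLmax : (0:ℝ) < Lmax := lt_of_lt_of_le hL hLLmax
  have hn' : (0:ℝ) < n := by exact_mod_cast hn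
  -- step size consequences
  have hs2 : (0:ℝ) < Real.sqrt 2 := Real.sqrt_pos.2 (by norm_num)
  have hc1 : (n:ℝ) * Lmax * η ≤ 1 / Real.sqrt 2 := by
    have h1 : η ≤ 1 / (Real.sqrt 2 * n * Lmax) := le_trans hη (min_le_left _ _)
    rw [le_div_iff₀ (by positivity)] at h1
    rw [div_eq_inv_mul, ← mul_le_mul_iff_right₀ hs2]
    calc Real.sqrt 2 * ((n:ℝ) * Lmax * η) = η * (Real.sqrt 2 * n * Lmax) := by ring
      _ ≤ 1 := h1
      _ = Real.sqrt 2 * (Real.sqrt 2)⁻¹ * 1 := by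
          rw [mul_inv_cancel₀ (ne_of_gt hs2)]; ring
      _ = Real.sqrt 2 * ((Real.sqrt 2)⁻¹ * 1) := by ring
  have hc1' : (n:ℝ) * Lmax * η ≤ 1 := le_trans hc1 (by
    rw [div_le_one hs2]
    nlinarith [Real.sq_sqrt (by norm_num : (2:ℝ) ≥ 0), hs2])
  have hc1sq : ((n:ℝ) * Lmax * η) ^ 2 ≤ 1 / 2 := by
    have h0 : (0:ℝ) ≤ (n:ℝ) * Lmax * η := by positivity
    have := mul_le_mul hc1 hc1 h0 (le_of_lt (by positivity))
    calc ((n:ℝ) * Lmax * η) ^ 2 = ((n:ℝ)*Lmax*η) * ((n:ℝ)*Lmax*η) := sq ((n:ℝ)*Lmax*η)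
      _ ≤ (1/Real.sqrt 2) * (1/Real.sqrt 2) := this
      _ = 1 / 2 := by
          rw [div_mul_div_comm, one_mul, Real.mul_self_sqrt (by norm_num)]
  have hc2 : α * L * Lmax ^ 2 * η ^ 2 * (n:ℝ) ^ 2 ≤ μ / 4 := by
    have hsal : (0:ℝ) < Real.sqrt (α * L) := Real.sqrt_pos.2 (by positivity)
    have h1 : η ≤ Real.sqrt μ / (2 * Lmax * n * Real.sqrt (α * L)) :=
      le_trans hη (min_le_right _ _)
    rw [le_div_iff₀ (by positivity)] at h1
    have h2 : (η * (2 * Lmax * n * Real.sqrt (α * L))) ^ 2 ≤ Real.sqrt μ ^ 2 := by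
      apply sq_le_sq' _ h1
      have hp : (0:ℝ) ≤ η * (2 * Lmax * ↑n * Real.sqrt (α * L)) := by positivity
      linarith [Real.sqrt_nonneg μ]
    rw [Real.sq_sqrt (le_of_lt hμ)] at h2
    have h3 : (η * (2 * Lmax * n * Real.sqrt (α * L))) ^ 2
        = 4 * (α * L) * Lmax ^ 2 * η ^ 2 * (n:ℝ)^2 := by
      have : Real.sqrt (α * L) ^ 2 = α * L := Real.sq_sqrt (by positivity)
      nlinarith [this]
    nlinarith [h2, h3]
  -- abbreviations for the within-epoch trajectory
  obtain ⟨X, hXdef⟩ : ∃ X : ℕ → EuclideanSpace ℝ (Fin d),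
      X = igIter (fun i => gradient (f i)) η y := ⟨_, rfl⟩
  obtain ⟨H, hHdef⟩ : ∃ H : ℕ → EuclideanSpace ℝ (Fin d),
      H = fun k => if h : k < n then gradient (f ⟨k, h⟩) (X k) else 0 := ⟨_, rfl⟩
  obtain ⟨C, hCdef⟩ : ∃ C : ℕ → EuclideanSpace ℝ (Fin d),
      C = fun k => if h : k < n then gradient (f ⟨k, h⟩) y else 0 := ⟨_, rfl⟩
  have hXeq : ∀ j, j ≤ n → X j = y - η • ∑ k ∈ range j, H k := by
    intro j hj
    have h := igIter_eq_sub_sum (fun i => gradient (f i)) η y j hj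
    rw [hHdef, hXdef]
    exact h
  have hHnorm : ∀ k, k < n → ‖H k‖ ≤ ‖C k‖ + Lmax * ‖X k - y‖ := by
    intro k hk
    have h1 : ‖H k - C k‖ ≤ Lmax * ‖X k - y‖ := by
      simp only [hHdef, hCdef, dif_pos hk]
      exact hsmooth_i _ _ _
    have h2 : ‖H k‖ = ‖C k + (H k - C k)‖ := by
      congr 1; abel
    calc ‖H k‖ = ‖C k + (H k - C k)‖ := h2
      _ ≤ ‖C k‖ + ‖H k - C k‖ := norm_add_le _ _
      _ ≤ _ := by linarith
  have haX : ∀ j, j ≤ n →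
      ‖X j - y‖ ≤ η * ∑ k ∈ range j, (‖C k‖ + Lmax * ‖X k - y‖) := by
    intro j hj
    rw [hXeq j hj]
    have h0 : y - η • ∑ k ∈ range j, H k - y = -(η • ∑ k ∈ range j, H k) := by abel
    rw [h0, norm_neg, norm_smul, Real.norm_eq_abs, abs_of_pos hη0]
    apply mul_le_mul_of_nonneg_left _ (le_of_lt hη0)
    calc ‖∑ k ∈ range j, H k‖ ≤ ∑ k ∈ range j, ‖H k‖ := norm_sum_le _ _
      _ ≤ ∑ k ∈ range j, (‖C k‖ + Lmax * ‖X k - y‖) := by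
          apply Finset.sum_le_sum; intro k hk
          exact hHnorm k (lt_of_lt_of_le (Finset.mem_range.1 hk) hj)
  obtain ⟨V, hVdef⟩ : ∃ V : ℝ, V = ∑ j ∈ range n, ‖X j - y‖ ^ 2 := ⟨_, rfl⟩
  obtain ⟨B2, hB2def⟩ : ∃ B2 : ℝ, B2 = ∑ k ∈ range n, ‖C k‖ ^ 2 := ⟨_, rfl⟩
  have hV0 : 0 ≤ V := hVdef ▸ Finset.sum_nonneg fun _ _ => sq_nonneg _
  have hB20 : 0 ≤ B2 := hB2def ▸ Finset.sum_nonneg fun _ _ => sq_nonneg _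
  have hsq : ∀ j, j < n → ‖X j - y‖ ^ 2 ≤ 2 * η ^ 2 * (j : ℝ) * (B2 + Lmax ^ 2 * V) := by
    intro j hj
    have hj0 : (0:ℝ) ≤ (j:ℝ) := Nat.cast_nonneg j
    have h1 := haX j (le_of_lt hj)
    have h2 : ‖X j - y‖ ^ 2 ≤ η ^ 2 * (∑ k ∈ range j, (‖C k‖ + Lmax * ‖X k - y‖)) ^ 2 := by
      calc ‖X j - y‖ ^ 2 ≤ (η * ∑ k ∈ range j, (‖C k‖ + Lmax * ‖X k - y‖)) ^ 2 :=
            pow_le_pow_left₀ (norm_nonneg _) h1 2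
        _ = η ^ 2 * (∑ k ∈ range j, (‖C k‖ + Lmax * ‖X k - y‖)) ^ 2 := by ring
    have h3 : (∑ k ∈ range j, (‖C k‖ + Lmax * ‖X k - y‖)) ^ 2
        ≤ (j : ℝ) * ∑ k ∈ range j, (‖C k‖ + Lmax * ‖X k - y‖) ^ 2 := by
      have := sq_sum_le_card_mul_sum_sq (s := range j)
        (f := fun k => ‖C k‖ + Lmax * ‖X k - y‖)
      simpa using this
    have h4 : ∑ k ∈ range j, (‖C k‖ + Lmax * ‖X k - y‖) ^ 2 ≤ 2 * (B2 + Lmax ^ 2 * V) := by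
      have e1 : ∑ k ∈ range j, ‖C k‖ ^ 2 ≤ B2 := hB2def ▸
        Finset.sum_le_sum_of_subset_of_nonneg
          (Finset.range_subset_range.2 (le_of_lt hj)) (fun _ _ _ => sq_nonneg _)
      have e2 : ∑ k ∈ range j, ‖X k - y‖ ^ 2 ≤ V := hVdef ▸
        Finset.sum_le_sum_of_subset_of_nonneg
          (Finset.range_subset_range.2 (le_of_lt hj)) (fun _ _ _ => sq_nonneg _)
      have e3 : ∑ k ∈ range j, (‖C k‖ + Lmax * ‖X k - y‖) ^ 2
          ≤ ∑ k ∈ range j, (2 * ‖C k‖ ^ 2 + 2 * Lmax ^ 2 * ‖X k - y‖ ^ 2) := by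
        apply Finset.sum_le_sum; intro k _
        have hs := sq_nonneg (‖C k‖ - Lmax * ‖X k - y‖)
        nlinarith [hs]
      have e4 : ∑ k ∈ range j, (2 * ‖C k‖ ^ 2 + 2 * Lmax ^ 2 * ‖X k - y‖ ^ 2)
          = 2 * (∑ k ∈ range j, ‖C k‖ ^ 2) + 2 * Lmax ^ 2 * ∑ k ∈ range j, ‖X k - y‖ ^ 2 := by
        rw [Finset.sum_add_distrib, ← Finset.mul_sum, ← Finset.mul_sum]
      nlinarith [sq_nonneg Lmax, mul_le_mul_of_nonneg_left e2 (by positivity : (0:ℝ) ≤ 2 * Lmax ^ 2)]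
    have h5 : (∑ k ∈ range j, (‖C k‖ + Lmax * ‖X k - y‖)) ^ 2
        ≤ (j : ℝ) * (2 * (B2 + Lmax ^ 2 * V)) :=
      le_trans h3 (mul_le_mul_of_nonneg_left h4 hj0)
    calc ‖X j - y‖ ^ 2 ≤ η ^ 2 * ((j : ℝ) * (2 * (B2 + Lmax ^ 2 * V))) :=
          le_trans h2 (mul_le_mul_of_nonneg_left h5 (by positivity))
      _ = 2 * η ^ 2 * (j : ℝ) * (B2 + Lmax ^ 2 * V) := by ring
  have hgauss : ∑ j ∈ range n, (j : ℝ) ≤ (n : ℝ) ^ 2 / 2 := by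
    have h : (∑ j ∈ range n, j) * 2 ≤ n ^ 2 := by
      calc (∑ j ∈ range n, j) * 2 = n * (n - 1) := Finset.sum_range_id_mul_two n
        _ ≤ n * n := Nat.mul_le_mul_left _ (Nat.sub_le _ _)
        _ = n ^ 2 := (sq n).symm
    have h2 : ((∑ j ∈ range n, j : ℕ) : ℝ) * 2 ≤ ((n : ℝ)) ^ 2 := by exact_mod_cast h
    have h3 : ∑ j ∈ range n, (j : ℝ) = ((∑ j ∈ range n, j : ℕ) : ℝ) := by push_cast; rfl
    linarith
  have hVbound : V ≤ 2 * η ^ 2 * (n : ℝ) ^ 2 * B2 := by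
    have hsum : V ≤ ∑ j ∈ range n, 2 * η ^ 2 * (j : ℝ) * (B2 + Lmax ^ 2 * V) := by
      conv_lhs => rw [hVdef]
      exact Finset.sum_le_sum fun j hj => hsq j (Finset.mem_range.1 hj)
    have hsum2 : ∑ j ∈ range n, 2 * η ^ 2 * (j : ℝ) * (B2 + Lmax ^ 2 * V)
        = 2 * η ^ 2 * (B2 + Lmax ^ 2 * V) * ∑ j ∈ range n, (j : ℝ) := by
      rw [Finset.mul_sum]
      exact Finset.sum_congr rfl fun j _ => by ring
    have s1 : V ≤ 2 * η ^ 2 * (B2 + Lmax ^ 2 * V) * ((n : ℝ) ^ 2 / 2) := by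
      rw [hsum2] at hsum
      exact le_trans hsum (mul_le_mul_of_nonneg_left hgauss (by positivity))
    have s2 : η ^ 2 * (n : ℝ) ^ 2 * Lmax ^ 2 * V ≤ 1 / 2 * V := by
      have h := mul_le_mul_of_nonneg_right hc1sq hV0
      nlinarith [h]
    nlinarith [s1, s2]
  obtain ⟨gs, hgs⟩ : ∃ gs : EuclideanSpace ℝ (Fin d), gs = ∑ k ∈ range n, H k := ⟨_, rfl⟩
  obtain ⟨e, he⟩ : ∃ e : EuclideanSpace ℝ (Fin d), e = gs - ∑ k ∈ range n, C k := ⟨_, rfl⟩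
  have he2 : ‖e‖ ^ 2 ≤ (n : ℝ) * Lmax ^ 2 * V := by
    have h1 : ‖e‖ ≤ ∑ k ∈ range n, ‖H k - C k‖ := by
      rw [he, hgs, ← Finset.sum_sub_distrib]
      exact norm_sum_le _ _
    have h2 : ‖e‖ ^ 2 ≤ (∑ k ∈ range n, ‖H k - C k‖) ^ 2 :=
      pow_le_pow_left₀ (norm_nonneg _) h1 2
    have h3 : (∑ k ∈ range n, ‖H k - C k‖) ^ 2 ≤ (n : ℝ) * ∑ k ∈ range n, ‖H k - C k‖ ^ 2 := by
      have := sq_sum_le_card_mul_sum_sq (s := range n) (f := fun k => ‖H k - C k‖)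
      simpa using this
    have h4 : ∑ k ∈ range n, ‖H k - C k‖ ^ 2 ≤ Lmax ^ 2 * V := by
      rw [hVdef, Finset.mul_sum]
      apply Finset.sum_le_sum; intro k hk
      have hk' := Finset.mem_range.1 hk
      have hlip : ‖H k - C k‖ ≤ Lmax * ‖X k - y‖ := by
        simp only [hHdef, hCdef, dif_pos hk']
        exact hsmooth_i _ _ _
      calc ‖H k - C k‖ ^ 2 ≤ (Lmax * ‖X k - y‖) ^ 2 := pow_le_pow_left₀ (norm_nonneg _) hlip 2
        _ = Lmax ^ 2 * ‖X k - y‖ ^ 2 := by ring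
    calc ‖e‖ ^ 2 ≤ (∑ k ∈ range n, ‖H k - C k‖) ^ 2 := h2
      _ ≤ (n : ℝ) * ∑ k ∈ range n, ‖H k - C k‖ ^ 2 := h3
      _ ≤ (n : ℝ) * (Lmax ^ 2 * V) := mul_le_mul_of_nonneg_left h4 (le_of_lt hn')
      _ = (n : ℝ) * Lmax ^ 2 * V := by ring
  have hCB : B2 = ∑ i : Fin n, ‖gradient (f i) y‖ ^ 2 := by
    rw [hB2def, ← Fin.sum_univ_eq_sum_range (fun k => ‖C k‖ ^ 2) n]
    exact Finset.sum_congr rfl fun i _ => by simp only [hCdef, dif_pos i.isLt, Fin.eta]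
  have hB2W : B2 ≤ (n : ℝ) * (2 * α * L * (F y - F xstar) + σ ^ 2) := by
    have hw := hWGC y
    rw [hCB]
    calc ∑ i : Fin n, ‖gradient (f i) y‖ ^ 2
        = (n : ℝ) * ((n : ℝ)⁻¹ * ∑ i : Fin n, ‖gradient (f i) y‖ ^ 2) := by
          field_simp
      _ ≤ (n : ℝ) * (2 * α * L * (F y - F xstar) + σ ^ 2) :=
          mul_le_mul_of_nonneg_left hw (le_of_lt hn')
  have hgradF : gradient F y = (n : ℝ)⁻¹ • ∑ i, gradient (f i) y := by
    rw [hF]; exact gradient_inv_mul_sum f hdiff y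
  have hnu : (n : ℝ) • gradient F y = ∑ k ∈ range n, C k := by
    rw [hgradF, smul_smul, mul_inv_cancel₀ (ne_of_gt hn'), one_smul,
      ← Fin.sum_univ_eq_sum_range (fun k => C k) n]
    exact Finset.sum_congr rfl fun i _ => by simp only [hCdef, dif_pos i.isLt, Fin.eta]
  have hFdiff : Differentiable ℝ F := by
    rw [hF]
    exact ((Differentiable.fun_sum fun i _ => hdiff i)).const_mul _
  obtain ⟨u, hu⟩ : ∃ u : EuclideanSpace ℝ (Fin d), u = gradient F y := ⟨_, rfl⟩
  have hmain0 : F (X n) ≤ F y + @inner ℝ _ _ u (-(η • gs)) + L / 2 * ‖-(η • gs)‖ ^ 2 := by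
    have hXn : X n = y + -(η • gs) := by rw [hXeq n le_rfl, sub_eq_add_neg, hgs]
    rw [hXn, hu]
    exact descent_lemma F hFdiff (le_of_lt hL) hsmooth y _
  have hinner : @inner ℝ _ _ u (-(η • gs)) = -(η * @inner ℝ _ _ u gs) := by
    rw [inner_neg_right, real_inner_smul_right]
  have hnormneg : ‖-(η • gs)‖ ^ 2 = η ^ 2 * ‖gs‖ ^ 2 := by
    rw [norm_neg, norm_smul, Real.norm_eq_abs, mul_pow, sq_abs]
  have hidn : ‖e‖ ^ 2 = ‖gs‖ ^ 2 - 2 * (n : ℝ) * @inner ℝ _ _ u gs + (n : ℝ) ^ 2 * ‖u‖ ^ 2 := by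
    have h0 : e = gs - (n : ℝ) • u := by rw [he, hu, hnu]
    rw [h0, @norm_sub_sq_real, real_inner_smul_right, norm_smul, Real.norm_eq_abs,
      abs_of_pos hn', real_inner_comm]
    ring
  have hkey : -(η * @inner ℝ _ _ u gs)
      = η / (2 * n) * ‖e‖ ^ 2 - η * n / 2 * ‖u‖ ^ 2 - η / (2 * n) * ‖gs‖ ^ 2 := by
    rw [hidn]
    field_simp
    ring
  have hstep1 : F (X n) ≤ F y - η * n / 2 * ‖u‖ ^ 2 + η / (2 * n) * ‖e‖ ^ 2 := by
    have hLηn : L * η * (n : ℝ) ≤ 1 := by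
      nlinarith [mul_le_mul_of_nonneg_right hLLmax (by positivity : (0:ℝ) ≤ η * (n : ℝ)), hc1']
    have hcoef : (L / 2 * η ^ 2 - η / (2 * n)) * ‖gs‖ ^ 2 ≤ 0 := by
      apply mul_nonpos_of_nonpos_of_nonneg _ (sq_nonneg _)
      have heq : L / 2 * η ^ 2 - η / (2 * n) = (L * η * n - 1) * (η / (2 * n)) := by
        field_simp
      rw [heq]
      apply mul_nonpos_of_nonpos_of_nonneg (by linarith) (by positivity)
    have h5 : L / 2 * ‖-(η • gs)‖ ^ 2 = L / 2 * η ^ 2 * ‖gs‖ ^ 2 := by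
      rw [hnormneg]; ring
    linarith [hmain0, hinner, hkey, hcoef, h5]
  -- final assembly
  have hΔ0 : 0 ≤ F y - F xstar := sub_nonneg.2 (hmin y)
  have h2mu : 2 * μ * (F y - F xstar) ≤ ‖u‖ ^ 2 := by
    have hPLy := hPL y
    rw [← hu] at hPLy
    have h := mul_le_mul_of_nonneg_left hPLy (le_of_lt (by positivity : (0:ℝ) < 2 * μ))
    have h2 : 2 * μ * (1 / (2 * μ) * ‖u‖ ^ 2) = ‖u‖ ^ 2 := by
      field_simp
    rw [h2] at h
    exact h
  have hE1 : ‖e‖ ^ 2 ≤ 2 * Lmax ^ 2 * η ^ 2 * (n : ℝ) ^ 4 * (2 * α * L * (F y - F xstar) + σ ^ 2) := by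
    calc ‖e‖ ^ 2 ≤ (n : ℝ) * Lmax ^ 2 * V := he2
      _ ≤ (n : ℝ) * Lmax ^ 2 * (2 * η ^ 2 * (n : ℝ) ^ 2 * B2) :=
          mul_le_mul_of_nonneg_left hVbound (by positivity)
      _ ≤ (n : ℝ) * Lmax ^ 2 * (2 * η ^ 2 * (n : ℝ) ^ 2 * ((n : ℝ) * (2 * α * L * (F y - F xstar) + σ ^ 2))) := by
          apply mul_le_mul_of_nonneg_left _ (by positivity)
          exact mul_le_mul_of_nonneg_left hB2W (by positivity)
      _ = 2 * Lmax ^ 2 * η ^ 2 * (n : ℝ) ^ 4 * (2 * α * L * (F y - F xstar) + σ ^ 2) := by ring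
  have hterm : η / (2 * n) * ‖e‖ ^ 2
      ≤ η * n * μ / 2 * (F y - F xstar) + Lmax ^ 2 * n ^ 3 * η ^ 3 * σ ^ 2 := by
    have h1 : η / (2 * n) * ‖e‖ ^ 2
        ≤ η / (2 * n) * (2 * Lmax ^ 2 * η ^ 2 * (n : ℝ) ^ 4 * (2 * α * L * (F y - F xstar) + σ ^ 2)) :=
      mul_le_mul_of_nonneg_left hE1 (by positivity)
    have h2 : η / (2 * n) * (2 * Lmax ^ 2 * η ^ 2 * (n : ℝ) ^ 4 * (2 * α * L * (F y - F xstar) + σ ^ 2))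
        = Lmax ^ 2 * η ^ 3 * (n : ℝ) ^ 3 * (2 * α * L * (F y - F xstar)) + Lmax ^ 2 * (n : ℝ) ^ 3 * η ^ 3 * σ ^ 2 := by
      field_simp
    have hfac : (0:ℝ) ≤ 2 * η * (n : ℝ) * (F y - F xstar) :=
      mul_nonneg (by positivity) hΔ0
    have h3 := mul_le_mul_of_nonneg_right hc2 hfac
    -- h3 : αLLmax²η²n² * (2ηnΔ) ≤ μ/4 * (2ηnΔ)
    linarith [h1, h2, h3]
  rw [← hXdef]
  have h4 := mul_le_mul_of_nonneg_left h2mu (by positivity : (0:ℝ) ≤ η * (n : ℝ) / 2)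
  linarith [hstep1, hterm, h4]

/-- Incremental gradient method for `μ`-PL objectives under the relaxed weak
growth condition: deterministic linear convergence to a noise-dominated
neighbourhood, where `igIter … n` applied `T` times is the iterate at the end
of epoch `T`. -/
theorem ig_pl_relaxed_wgc_rate
    (d n : ℕ) (hn : 0 < n)
    (f : Fin n → EuclideanSpace ℝ (Fin d) → ℝ)
    (hdiff : ∀ i, Differentiable ℝ (f i))
    (F : EuclideanSpace ℝ (Fin d) → ℝ)
    (hF : F = fun x => (n : ℝ)⁻¹ * ∑ i, f i x)
    (L Lmax μ : ℝ) (hL : 0 < L) (hμ : 0 < μ) (hLLmax : L ≤ Lmax)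
    (hsmooth : ∀ x y : EuclideanSpace ℝ (Fin d),
      ‖gradient F x - gradient F y‖ ≤ L * ‖x - y‖)
    (hsmooth_i : ∀ i, ∀ x y : EuclideanSpace ℝ (Fin d),
      ‖gradient (f i) x - gradient (f i) y‖ ≤ Lmax * ‖x - y‖)
    (xstar : EuclideanSpace ℝ (Fin d))
    (hmin : ∀ x, F xstar ≤ F x)
    (hPL : ∀ x, F x - F xstar ≤ 1 / (2 * μ) * ‖gradient F x‖ ^ 2)
    (α σ : ℝ) (hα : 0 < α) (hσ : 0 ≤ σ)
    (hWGC : ∀ x, (n : ℝ)⁻¹ * ∑ i, ‖gradient (f i) x‖ ^ 2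
      ≤ 2 * α * L * (F x - F xstar) + σ ^ 2)
    (η : ℝ) (hη0 : 0 < η)
    (hη : η ≤ min (1 / (Real.sqrt 2 * n * Lmax)) (Real.sqrt μ / (2 * Lmax * n * Real.sqrt (α * L))))
    (x0 : EuclideanSpace ℝ (Fin d)) (T : ℕ) :
    F ((fun y => igIter (fun i => gradient (f i)) η y n)^[T] x0) - F xstar
      ≤ (1 - n * μ * η / 2) ^ T * (F x0 - F xstar)
        + 2 * Lmax ^ 2 * η ^ 2 * n ^ 2 * σ ^ 2 / μ := by
  have hLmax : (0:ℝ) < Lmax := lt_of_lt_of_le hL hLLmax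
  have hn' : (0:ℝ) < n := by exact_mod_cast hn
  have hnoise : (0:ℝ) ≤ 2 * Lmax ^ 2 * η ^ 2 * (n:ℝ) ^ 2 * σ ^ 2 / μ := by positivity
  by_cases hdeg : ∀ x, F x = F xstar
  · have h1 : F ((fun y => igIter (fun i => gradient (f i)) η y n)^[T] x0) = F xstar := hdeg _
    have h2 : F x0 = F xstar := hdeg _
    rw [h1, h2]
    simpa using hnoise
  · push_neg at hdeg
    obtain ⟨z, hz⟩ := hdeg
    have hzgt : F xstar < F z := lt_of_le_of_ne (hmin z) (Ne.symm hz)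
    have hFdiff : Differentiable ℝ F := by
      rw [hF]
      exact ((Differentiable.fun_sum fun i _ => hdiff i)).const_mul _
    -- μ ≤ L
    have hgsq : ‖gradient F z‖ ^ 2 ≤ 2 * L * (F z - F xstar) := by
      have hd := descent_lemma F hFdiff (le_of_lt hL) hsmooth z (-((1 / L) • gradient F z))
      have hmin' := hmin (z + -((1 / L) • gradient F z))
      have hi : @inner ℝ _ _ (gradient F z) (-((1 / L) • gradient F z))
          = -(1 / L) * ‖gradient F z‖ ^ 2 := by
        rw [inner_neg_right, real_inner_smul_right, real_inner_self_eq_norm_sq]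
        ring
      have hn2 : ‖-((1 / L) • gradient F z)‖ ^ 2 = (1 / L) ^ 2 * ‖gradient F z‖ ^ 2 := by
        rw [norm_neg, norm_smul, Real.norm_eq_abs, mul_pow, sq_abs]
      rw [hi, hn2] at hd
      have harith : -(1 / L) * ‖gradient F z‖ ^ 2 + L / 2 * ((1 / L) ^ 2 * ‖gradient F z‖ ^ 2)
          = -(1 / (2 * L)) * ‖gradient F z‖ ^ 2 := by
        field_simp
        ring
      have h2L : (0:ℝ) < 2 * L := by positivity
      have hth := le_trans hmin' hd
      have hstep : 1 / (2 * L) * ‖gradient F z‖ ^ 2 ≤ F z - F xstar := by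
        linarith [hth, harith]
      have hmm := mul_le_mul_of_nonneg_left hstep (le_of_lt h2L)
      have hcan : 2 * L * (1 / (2 * L) * ‖gradient F z‖ ^ 2) = ‖gradient F z‖ ^ 2 := by
        field_simp
      rw [hcan] at hmm
      linarith [hmm]
    have hmuL : μ ≤ L := by
      have hp := hPL z
      have h1 : 2 * μ * (F z - F xstar) ≤ ‖gradient F z‖ ^ 2 := by
        have h := mul_le_mul_of_nonneg_left hp (le_of_lt (by positivity : (0:ℝ) < 2 * μ))
        have h2 : 2 * μ * (1 / (2 * μ) * ‖gradient F z‖ ^ 2) = ‖gradient F z‖ ^ 2 := by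
          field_simp
        rw [h2] at h
        exact h
      by_contra hc
      push_neg at hc
      have : 2 * L * (F z - F xstar) < 2 * μ * (F z - F xstar) := by nlinarith [hzgt]
      linarith [h1, hgsq]
    -- contraction factor in [0,1)
    have hs2 : (0:ℝ) < Real.sqrt 2 := Real.sqrt_pos.2 (by norm_num)
    have hc1 : (n:ℝ) * Lmax * η ≤ 1 := by
      have h1 : η ≤ 1 / (Real.sqrt 2 * n * Lmax) := le_trans hη (min_le_left _ _)
      rw [le_div_iff₀ (by positivity)] at h1
      have hs21 : (1:ℝ) ≤ Real.sqrt 2 := by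
        nlinarith [Real.sq_sqrt (by norm_num : (0:ℝ) ≤ 2), hs2]
      nlinarith [h1, hη0, hn', hLmax]
    have hq0 : 0 ≤ 1 - (n:ℝ) * μ * η / 2 := by
      have h1 : (n:ℝ) * μ * η ≤ (n:ℝ) * Lmax * η := by
        have hm : μ ≤ Lmax := le_trans hmuL hLLmax
        have := mul_le_mul_of_nonneg_right hm (mul_nonneg (le_of_lt hn') (le_of_lt hη0))
        linarith [this]
      linarith [hc1]
    have hq1 : 1 - (n:ℝ) * μ * η / 2 < 1 := by
      have : (0:ℝ) < (n:ℝ) * μ * η := by positivity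
      linarith
    -- recursion
    have hrec : ∀ t, F ((fun y => igIter (fun i => gradient (f i)) η y n)^[t+1] x0) - F xstar
        ≤ (1 - (n:ℝ) * μ * η / 2) *
            (F ((fun y => igIter (fun i => gradient (f i)) η y n)^[t] x0) - F xstar)
          + Lmax ^ 2 * (n:ℝ) ^ 3 * η ^ 3 * σ ^ 2 := by
      intro t
      rw [Function.iterate_succ_apply']
      exact epoch_bound d n hn f hdiff F hF L Lmax μ hL hμ hLLmax hsmooth hsmooth_i xstar
        hmin hPL α σ hα hσ hWGC η hη0 hη _
    have hN0 : (0:ℝ) ≤ Lmax ^ 2 * (n:ℝ) ^ 3 * η ^ 3 * σ ^ 2 := by positivity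
    have hind : ∀ t, F ((fun y => igIter (fun i => gradient (f i)) η y n)^[t] x0) - F xstar
        ≤ (1 - (n:ℝ) * μ * η / 2) ^ t * (F x0 - F xstar)
          + Lmax ^ 2 * (n:ℝ) ^ 3 * η ^ 3 * σ ^ 2 * ∑ k ∈ range t, (1 - (n:ℝ) * μ * η / 2) ^ k := by
      intro t
      induction t with
      | zero => simp
      | succ t ih =>
        have h1 := hrec t
        have h2 := mul_le_mul_of_nonneg_left ih hq0
        have h3 : ∑ k ∈ range (t+1), (1 - (n:ℝ) * μ * η / 2) ^ k
            = (1 - (n:ℝ) * μ * η / 2) * ∑ k ∈ range t, (1 - (n:ℝ) * μ * η / 2) ^ k + 1 :=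
          geom_sum_succ
        rw [h3, pow_succ]
        nlinarith [h1, h2]
    have hgeom : ∑ k ∈ range T, (1 - (n:ℝ) * μ * η / 2) ^ k ≤ 1 / ((n:ℝ) * μ * η / 2) := by
      have hq : (1 - (n:ℝ) * μ * η / 2) ≠ 1 := by
        intro h
        have : (0:ℝ) < (n:ℝ) * μ * η := by positivity
        linarith
      rw [geom_sum_eq hq]
      have hpT : (0:ℝ) ≤ (1 - (n:ℝ) * μ * η / 2) ^ T := pow_nonneg hq0 T
      have hden : (0:ℝ) < (n:ℝ) * μ * η / 2 := by positivity
      have hrw : ((1 - (n:ℝ) * μ * η / 2) ^ T - 1) / (1 - (n:ℝ) * μ * η / 2 - 1)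
          = (1 - (1 - (n:ℝ) * μ * η / 2) ^ T) / ((n:ℝ) * μ * η / 2) := by
        rw [← neg_div_neg_eq]
        ring_nf
      rw [hrw, div_le_div_iff₀ hden hden]
      nlinarith [hpT, hden]
    have hfinal := hind T
    have hmul := mul_le_mul_of_nonneg_left hgeom hN0
    have heq : Lmax ^ 2 * (n:ℝ) ^ 3 * η ^ 3 * σ ^ 2 * (1 / ((n:ℝ) * μ * η / 2))
        = 2 * Lmax ^ 2 * η ^ 2 * (n:ℝ) ^ 2 * σ ^ 2 / μ := by
      field_simp
    calc F ((fun y => igIter (fun i => gradient (f i)) η y n)^[T] x0) - F xstar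
        ≤ (1 - (n:ℝ) * μ * η / 2) ^ T * (F x0 - F xstar)
          + Lmax ^ 2 * (n:ℝ) ^ 3 * η ^ 3 * σ ^ 2 * ∑ k ∈ range T, (1 - (n:ℝ) * μ * η / 2) ^ k :=
          hfinal
      _ ≤ (1 - (n:ℝ) * μ * η / 2) ^ T * (F x0 - F xstar)
          + Lmax ^ 2 * (n:ℝ) ^ 3 * η ^ 3 * σ ^ 2 * (1 / ((n:ℝ) * μ * η / 2)) := by
          linarith [hmul]
      _ = (1 - (n:ℝ) * μ * η / 2) ^ T * (F x0 - F xstar)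
          + 2 * Lmax ^ 2 * η ^ 2 * (n:ℝ) ^ 2 * σ ^ 2 / μ := by rw [heq]
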